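/- arXiv:1309.6190 — 2 statements merged into one kernel-verified Lean document; each statement's English description precedes it below -/
import Mathlib

section
/- Let θ be a domestic collineation of a generalised 2m-gon with parameters (s,t), and suppose there is a fixed point p₀ and a fixed line L₀ with d(p₀, L₀) = 2m − 1 in the incidence graph. Then either all lines through p₀ are fixed by θ, or all points on L₀ are fixed by θ. -/
open SimpleGraph

/-- The incidence graph of a point-line geometry, on vertex set `P ⊕ L`. -/
def incGraph {P L : Type*} (inc : P → L → Prop) : SimpleGraph (P ⊕ L) where
  Adj x y := (∃ p l, x = Sum.inl p ∧ y = Sum.inr l ∧ inc p l) ∨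
             (∃ p l, x = Sum.inr l ∧ y = Sum.inl p ∧ inc p l)
  symm := by
    constructor
    rintro x y (⟨p, l, rfl, rfl, h⟩ | ⟨p, l, rfl, rfl, h⟩)
    · exact Or.inr ⟨p, l, rfl, rfl, h⟩
    · exact Or.inl ⟨p, l, rfl, rfl, h⟩
  loopless := by
    constructor
    rintro x (⟨p, l, rfl, h, _⟩ | ⟨p, l, rfl, h, _⟩) <;> cases h

/-- A (weak) generalised `n`-gon: the incidence graph is connected, has diameter `n` and
girth `2n`. -/
structure IsGenPolygon {P L : Type*} (n : ℕ) (inc : P → L → Prop) : Prop where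
  connected : (incGraph inc).Connected
  dist_le : ∀ x y : P ⊕ L, (incGraph inc).dist x y ≤ n
  exists_dist_eq : ∃ x y : P ⊕ L, (incGraph inc).dist x y = n
  girth_eq : (incGraph inc).girth = (2 * n : ℕ)

/-- Thickness: every point is on at least three lines and every line carries at least three
points. -/
def IsThick {P L : Type*} (inc : P → L → Prop) : Prop :=
  (∀ p : P, ∃ l₁ l₂ l₃ : L, inc p l₁ ∧ inc p l₂ ∧ inc p l₃ ∧ l₁ ≠ l₂ ∧ l₁ ≠ l₃ ∧ l₂ ≠ l₃) ∧
  (∀ l : L, ∃ p₁ p₂ p₃ : P, inc p₁ l ∧ inc p₂ l ∧ inc p₃ l ∧ p₁ ≠ p₂ ∧ p₁ ≠ p₃ ∧ p₂ ≠ p₃)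

/-- The geometry has parameters `(s, t)`: each line carries `s + 1` points and each point is
on `t + 1` lines. -/
def HasParams {P L : Type*} (inc : P → L → Prop) (s t : ℕ) : Prop :=
  (∀ l : L, Nat.card {p : P // inc p l} = s + 1) ∧
  (∀ p : P, Nat.card {l : L // inc p l} = t + 1)

/-- A collineation: a pair of permutations of the points and the lines preserving
incidence. -/
def IsCollineation {P L : Type*} (inc : P → L → Prop) (θP : Equiv.Perm P)
    (θL : Equiv.Perm L) : Prop :=
  ∀ p l, inc p l ↔ inc (θP p) (θL l)

/-- Two chambers `{p, l}` and `{p', l'}` of a generalised `m`-gon are opposite. -/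
def OppChambers {P L : Type*} (inc : P → L → Prop) (m : ℕ)
    (p p' : P) (l l' : L) : Prop :=
  ((incGraph inc).dist (Sum.inl p) (Sum.inl p') = m ∧
    (incGraph inc).dist (Sum.inr l) (Sum.inr l') = m) ∨
  ((incGraph inc).dist (Sum.inl p) (Sum.inr l') = m ∧
    (incGraph inc).dist (Sum.inr l) (Sum.inl p') = m)

/-- A collineation is domestic if it maps no chamber to an opposite chamber. -/
def IsDomesticColl {P L : Type*} (inc : P → L → Prop) (m : ℕ) (θP : Equiv.Perm P)
    (θL : Equiv.Perm L) : Prop :=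
  ¬ ∃ p l, inc p l ∧ OppChambers inc m p (θP p) l (θL l)

namespace DomFixAux

open SimpleGraph Walk List

variable {V : Type*} {G : SimpleGraph V}

lemma girth_le_of_isCycle {a : V} {w : G.Walk a a} (hw : w.IsCycle) :
    G.girth ≤ w.length := by
  have h : G.egirth ≤ (w.length : ℕ∞) :=
    iInf_le_of_le a (iInf_le_of_le w (iInf_le_of_le hw le_rfl))
  have h2 := ENat.toNat_le_toNat h (by simp)
  simpa [SimpleGraph.girth] using h2

lemma getVert_map {V' : Type*} {G' : SimpleGraph V'} (f : G →g G') :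
    ∀ {u v : V} (W : G.Walk u v) (i : ℕ), (W.map f).getVert i = f (W.getVert i)
  | _, _, Walk.nil, _ => rfl
  | _, _, Walk.cons h T, 0 => by simp
  | _, _, Walk.cons h T, (i+1) => by
    rw [Walk.map_cons, Walk.getVert_cons_succ, Walk.getVert_cons_succ]
    exact getVert_map f T i

lemma exists_prefix : ∀ {u v : V} (W : G.Walk u v) (i : ℕ), i ≤ W.length →
    ∃ Pw : G.Walk u (W.getVert i), Pw.length = i ∧
      Pw.support = (List.range (i + 1)).map W.getVert
  | u, v, W, 0, _ =>
    ⟨Walk.nil.copy rfl (W.getVert_zero).symm, by simp, by simp [List.range_succ]⟩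
  | _, _, Walk.nil, (i+1), hi => by simp at hi
  | u, v, Walk.cons h T, (i+1), hi => by
    obtain ⟨Pw, hlen, hsupp⟩ := exists_prefix T i (by simpa using hi)
    refine ⟨(Walk.cons h Pw).copy rfl (T.getVert_cons_succ h).symm, by simp [hlen], ?_⟩
    rw [Walk.support_copy, Walk.support_cons, hsupp]
    conv_rhs => rw [List.range_succ_eq_map]
    simp [List.map_map, Function.comp_def, Walk.getVert_cons_succ]

lemma exists_suffix : ∀ {u v : V} (W : G.Walk u v) (i : ℕ),
    ∃ Sw : G.Walk (W.getVert i) v, Sw.length = W.length - i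
  | u, v, W, 0 => ⟨W.copy (W.getVert_zero).symm rfl, by simp⟩
  | u, _, Walk.nil, (i+1) =>
    ⟨(Walk.nil : G.Walk u u).copy
      ((Walk.getVert_of_length_le Walk.nil (by simp)).symm) rfl, by simp⟩
  | u, v, Walk.cons h T, (i+1) => by
    obtain ⟨Sw, hl⟩ := exists_suffix T i
    exact ⟨Sw.copy (T.getVert_cons_succ h).symm rfl, by simpa using hl⟩

lemma dist_getVert_of_geodesic (hconn : G.Connected) {u v : V} (W : G.Walk u v)
    (hW : W.length = G.dist u v) {i : ℕ} (hi : i ≤ W.length) :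
    G.dist u (W.getVert i) = i ∧ G.dist (W.getVert i) v = W.length - i := by
  obtain ⟨Pw, hPl, _⟩ := exists_prefix W i hi
  obtain ⟨Sw, hSl⟩ := exists_suffix W i
  have h1 : G.dist u (W.getVert i) ≤ i := by
    have := SimpleGraph.dist_le Pw; omega
  have h2 : G.dist (W.getVert i) v ≤ W.length - i := by
    have := SimpleGraph.dist_le Sw; omega
  have h3 : G.dist u v ≤ G.dist u (W.getVert i) + G.dist (W.getVert i) v :=
    hconn.dist_triangle
  constructor <;> omega

lemma firstHit : ∀ {a b : V} (T : G.Walk a b) (S : List V), b ∈ S →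
    ∃ (w : V) (Pw : G.Walk a w), Pw.length ≤ T.length ∧ w ∈ S ∧
      (∀ y ∈ Pw.support, y ≠ w → y ∉ S) ∧ Pw.support ⊆ T.support ∧
      (T.IsPath → Pw.IsPath) := by
  intro a b T
  induction T with
  | nil =>
    intro S hb
    refine ⟨_, Walk.nil, le_rfl, hb, ?_, fun _ h => h, fun _ => Walk.IsPath.nil⟩
    intro y hy hyw
    rw [Walk.support_nil, List.mem_singleton] at hy
    exact absurd hy hyw
  | @cons u x b h T ih =>
    intro S hb
    by_cases ha : u ∈ S
    · refine ⟨u, Walk.nil, by simp, ha, ?_, by simp, fun _ => Walk.IsPath.nil⟩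
      intro y hy hyw
      rw [Walk.support_nil, List.mem_singleton] at hy
      exact absurd hy hyw
    · obtain ⟨w, Pw, h1, h2, h3, h4, h5⟩ := ih S hb
      refine ⟨w, Walk.cons h Pw, by simp only [Walk.length_cons]; omega, h2, ?_, ?_, ?_⟩
      · intro y hy hyw
        rw [Walk.support_cons, List.mem_cons] at hy
        rcases hy with rfl | hy
        · exact ha
        · exact h3 y hy hyw
      · rw [Walk.support_cons, Walk.support_cons]
        intro y hy
        rw [List.mem_cons] at hy ⊢
        rcases hy with rfl | hy
        · exact Or.inl rfl
        · exact Or.inr (h4 hy)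
      · intro hp
        have hp' := hp.of_cons
        refine Walk.IsPath.cons (h5 hp') ?_
        intro hu
        have hmem : u ∈ T.support := h4 hu
        rw [Walk.cons_isPath_iff] at hp
        exact hp.2 hmem

/-- In a graph all of whose cycles have length at least `N`, two distinct paths between the
same pair of vertices have total length at least `N`. -/
lemma two_paths [DecidableEq V] (N : ℕ)
    (hN : ∀ {a : V} (w : G.Walk a a), w.IsCycle → N ≤ w.length) :
    ∀ (k : ℕ) {u v : V} (W₁ W₂ : G.Walk u v), W₁.length ≤ k → W₁.IsPath → W₂.IsPath →
      W₁ ≠ W₂ → W₁.length + W₂.length < N → False := by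
  intro k
  induction k with
  | zero =>
    intro u v W₁ W₂ hk h1 h2 hne _
    cases W₁ with
    | nil => exact hne (Walk.isPath_iff_eq_nil.1 h2).symm
    | cons h T => simp at hk
  | succ k ih =>
    intro u v W₁ W₂ hk h1 h2 hne hlen
    cases W₁ with
    | nil => exact hne (Walk.isPath_iff_eq_nil.1 h2).symm
    | @cons _ x₁ _ h T =>
      cases W₂ with
      | nil =>
        have h0 := Walk.isPath_iff_eq_nil.1 h1
        simp at h0
      | @cons _ x₂ _ h' T' =>
        by_cases hx : x₁ = x₂
        · subst hx
          refine ih T T' (by simpa using hk) h1.of_cons h2.of_cons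
            (fun hT => hne (by rw [hT])) (by simp only [Walk.length_cons] at hlen ⊢; omega)
        · -- construct a cycle through u out of the two paths
          obtain ⟨w, Pw, hP1, hP2, hP3, hP4, hP5⟩ :=
            firstHit T (Walk.cons h' T').support (Walk.end_mem_support _)
          have hQp : ((Walk.cons h' T').takeUntil w hP2).IsPath := h2.takeUntil hP2
          set Q := (Walk.cons h' T').takeUntil w hP2 with hQ
          have hPp : Pw.IsPath := hP5 h1.of_cons
          have hu_not_T : u ∉ T.support := by
            rw [Walk.cons_isPath_iff] at h1; exact h1.2
          have hu_not_T' : u ∉ T'.support := by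
            rw [Walk.cons_isPath_iff] at h2; exact h2.2
          have happ : (Pw.append Q.reverse).IsPath := by
            rw [Walk.isPath_def, Walk.support_append, List.nodup_append]
            refine ⟨(Walk.isPath_def _).1 hPp, ?_, ?_⟩
            · have hnd : Q.reverse.support.Nodup := (Walk.isPath_def _).1 hQp.reverse
              rw [Walk.support_eq_cons Q.reverse] at hnd
              exact hnd.of_cons
            · intro y hyP z hyQ hyz
              rw [← hyz] at hyQ
              have hyQ' : y ∈ Q.reverse.support := List.mem_of_mem_tail hyQ
              have hynw : y ≠ w := by
                have hnd : Q.reverse.support.Nodup := (Walk.isPath_def _).1 hQp.reverse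
                rw [Walk.support_eq_cons Q.reverse] at hnd
                intro hyw; subst hyw
                exact (List.nodup_cons.1 hnd).1 hyQ
              have hyW₂ : y ∈ (Walk.cons h' T').support := by
                have hyQ'' : y ∈ Q.support := by
                  rw [Walk.support_reverse] at hyQ'
                  exact List.mem_reverse.1 hyQ'
                exact Walk.support_takeUntil_subset _ hP2 hyQ''
              exact hP3 y hyP hynw hyW₂
          have hedge : ¬ s(u, x₁) ∈ (Pw.append Q.reverse).edges := by
            rw [Walk.edges_append, List.mem_append]
            rintro (he | he)
            · exact hu_not_T (hP4 (Pw.fst_mem_support_of_mem_edges he))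
            · rw [Walk.edges_reverse, List.mem_reverse] at he
              have heW₂ : s(u, x₁) ∈ (Walk.cons h' T').edges :=
                Walk.edges_takeUntil_subset _ hP2 he
              rw [Walk.edges_cons, List.mem_cons] at heW₂
              rcases heW₂ with heq | hmem
              · rw [Sym2.eq_iff] at heq
                rcases heq with ⟨-, h12⟩ | ⟨hux₂, hx₁u⟩
                · exact hx h12
                · exact h.ne hx₁u.symm
              · exact hu_not_T' (T'.fst_mem_support_of_mem_edges hmem)
          have hcyc : (Walk.cons h (Pw.append Q.reverse)).IsCycle :=
            (Walk.cons_isCycle_iff _ h).2 ⟨happ, hedge⟩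
          have hNle := hN _ hcyc
          have hQlen : Q.length ≤ (Walk.cons h' T').length :=
            Walk.length_takeUntil_le _ hP2
          simp only [Walk.length_cons, Walk.length_append, Walk.length_reverse]
            at hNle hlen hQlen
          omega

/-- The key displacement lemma: along a geodesic `W` starting at a non-fixed vertex `u`
which is adjacent to a fixed vertex `c`, the displacement of the `i`-th vertex is
exactly `2 i + 2`, as long as `2 i + 2 ≤ 2 m` (half the girth). -/
lemma master [DecidableEq V] {m : ℕ} (hconn : G.Connected)
    (hN : ∀ {a : V} (w : G.Walk a a), w.IsCycle → 4 * m ≤ w.length)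
    (fh : G →g G) (hfd : ∀ x y, G.dist (fh x) (fh y) = G.dist x y)
    (hfinj : Function.Injective fh)
    {u v c : V} (W : G.Walk u v) (hWgeo : W.length = G.dist u v)
    (hfc : fh c = c) (hadj : G.Adj c u)
    (hznec : ∀ j, j ≤ W.length → W.getVert j ≠ c)
    (hinj : ∀ j k, j ≤ W.length → k ≤ W.length →
      W.getVert j = fh (W.getVert k) → j = k)
    (hfu : fh u ≠ u) :
    ∀ i, i ≤ W.length → 2 * i + 2 ≤ 2 * m →
      G.dist (W.getVert i) (fh (W.getVert i)) = 2 * i + 2 := by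
  intro i
  induction i using Nat.strong_induction_on with
  | _ i IH =>
  intro hin him
  have hdu : ∀ j, j ≤ W.length → G.dist u (W.getVert j) = j := fun j hj =>
    (dist_getVert_of_geodesic hconn W hWgeo hj).1
  obtain ⟨Pw, hPl, hPs⟩ := exists_prefix W i hin
  have hmemPw : ∀ y ∈ Pw.support, ∃ j, j ≤ i ∧ W.getVert j = y := by
    intro y hy
    rw [hPs, List.mem_map] at hy
    obtain ⟨j, hj, rfl⟩ := hy
    rw [List.mem_range] at hj
    exact ⟨j, by omega, rfl⟩
  have hPnd : Pw.support.Nodup := by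
    rw [hPs]
    refine List.Nodup.map_on ?_ (List.nodup_range)
    intro j hj k hk hjk
    rw [List.mem_range] at hj hk
    have e1 := hdu j (by omega)
    have e2 := hdu k (by omega)
    rw [hjk] at e1; omega
  have hcPw : c ∉ Pw.support := by
    intro hc
    obtain ⟨j, hj, hje⟩ := hmemPw c hc
    exact hznec j (by omega) hje
  have huPw : u ∈ Pw.support := Pw.start_mem_support
  -- step A : the i-th vertex is not fixed
  have hzne : W.getVert i ≠ fh (W.getVert i) := by
    intro hzi
    have hR : (Pw.reverse.append (Walk.cons hadj.symm Walk.nil)).IsPath := by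
      rw [Walk.isPath_def, Walk.support_append, Walk.support_cons, Walk.support_nil,
        List.tail_cons, Walk.support_reverse, List.nodup_append]
      refine ⟨List.nodup_reverse.mpr hPnd, List.nodup_singleton c, ?_⟩
      intro y hy z hy' hyz
      rw [List.mem_reverse] at hy
      rw [List.mem_singleton] at hy'
      subst hy'
      subst hyz
      exact hcPw hy
    set R : G.Walk (W.getVert i) c := Pw.reverse.append (Walk.cons hadj.symm Walk.nil)
      with hRdef
    set R' : G.Walk (W.getVert i) c := (R.map fh).copy hzi.symm hfc with hR'def
    have hR'p : R'.IsPath := by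
      rw [hR'def, Walk.isPath_copy]
      exact Walk.map_isPath_of_injective hfinj hR
    have huR : u ∈ R.support := by
      rw [hRdef, Walk.support_append, List.mem_append, Walk.support_reverse,
        List.mem_reverse]
      exact Or.inl huPw
    have huR' : u ∉ R'.support := by
      rw [hR'def, Walk.support_copy, Walk.support_map, List.mem_map]
      rintro ⟨y, hyR, hyu⟩
      rw [hRdef, Walk.support_append, List.mem_append, Walk.support_reverse,
        List.mem_reverse, Walk.support_cons, Walk.support_nil, List.tail_cons,
        List.mem_singleton] at hyR
      rcases hyR with hyP | rfl
      · obtain ⟨j, hj, rfl⟩ := hmemPw y hyP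
        have h0 : W.getVert 0 = fh (W.getVert j) := by
          rw [W.getVert_zero]; exact hyu.symm
        have h00 := hinj 0 j (by omega) (by omega) h0
        rw [← h00] at hyu
        rw [W.getVert_zero] at hyu
        exact hfu hyu
      · rw [hfc] at hyu
        exact hznec 0 (by omega) (by rw [W.getVert_zero]; exact hyu.symm)
    have hRne : R ≠ R' := by
      intro hRR
      rw [hRR] at huR
      exact huR' huR
    have hRlen : R.length = i + 1 := by
      rw [hRdef]
      simp [Walk.length_append, Walk.length_reverse, hPl]
    have hR'len : R'.length = i + 1 := by
      rw [hR'def, Walk.length_copy, Walk.length_map, hRlen]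
    exact two_paths (4 * m) hN R.length R R' le_rfl hR hR'p hRne (by omega)
  -- step B : the long path S of length 2i+2 from the i-th vertex to its image
  have hadj2 : G.Adj c (fh u) := by
    have := fh.map_adj hadj
    rwa [hfc] at this
  set Mp : G.Walk (fh u) (fh (W.getVert i)) := Pw.map fh with hMpdef
  set S : G.Walk (W.getVert i) (fh (W.getVert i)) :=
    Pw.reverse.append (Walk.cons hadj.symm (Walk.cons hadj2 Mp)) with hSdef
  have hSlen : S.length = 2 * i + 2 := by
    rw [hSdef]
    simp only [Walk.length_append, Walk.length_reverse, Walk.length_cons, hMpdef,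
      Walk.length_map, hPl]
    omega
  have hSp : S.IsPath := by
    rw [hSdef, Walk.isPath_def]
    simp only [Walk.support_append, Walk.support_cons, List.tail_cons,
      Walk.support_reverse]
    rw [List.nodup_append]
    refine ⟨List.nodup_reverse.mpr hPnd, ?_, ?_⟩
    · rw [List.nodup_cons]
      constructor
      · rw [hMpdef, Walk.support_map, List.mem_map]
        rintro ⟨y, hy, hyc⟩
        have hcc : fh y = fh c := by rw [hyc, hfc]
        have := hfinj hcc
        subst this
        exact hcPw hy
      · rw [hMpdef, Walk.support_map]
        exact hPnd.map hfinj
    · intro y hy z hy' hyz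
      rw [← hyz] at hy'
      rw [List.mem_reverse] at hy
      obtain ⟨j, hj, rfl⟩ := hmemPw y hy
      rw [List.mem_cons] at hy'
      rcases hy' with hc | hy'
      · exact hznec j (by omega) hc
      · rw [hMpdef, Walk.support_map, List.mem_map] at hy'
        obtain ⟨y', hy', hyy⟩ := hy'
        obtain ⟨k, hk, rfl⟩ := hmemPw y' hy'
        have hjk := hinj j k (by omega) (by omega) hyy.symm
        subst hjk
        rcases Nat.lt_or_ge j i with hji | hji
        · have hIH := IH j hji (by omega) (by omega)
          rw [hyy] at hIH
          rw [SimpleGraph.dist_self] at hIH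
          omega
        · have hji' : j = i := by omega
          subst hji'
          exact hzne hyy.symm
  have hle : G.dist (W.getVert i) (fh (W.getVert i)) ≤ 2 * i + 2 := by
    have := SimpleGraph.dist_le S; omega
  refine le_antisymm hle ?_
  by_contra hlt
  push_neg at hlt
  obtain ⟨E, hEp, hEl⟩ := hconn.exists_path_of_dist (W.getVert i) (fh (W.getVert i))
  have hES : E ≠ S := by
    intro hE
    rw [hE] at hEl
    omega
  exact two_paths (4 * m) hN E.length E S le_rfl hEp hSp hES (by omega)

lemma incGraph_walk_parity {P L : Type*} {inc : P → L → Prop} :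
    ∀ {x y : P ⊕ L} (W : (incGraph inc).Walk x y),
      Even W.length ↔ (x.isLeft = y.isLeft) := by
  intro x y W
  induction W with
  | nil => simp
  | @cons x b y h T ih =>
    have h' : (∃ p l, x = Sum.inl p ∧ b = Sum.inr l ∧ inc p l) ∨
        (∃ p l, x = Sum.inr l ∧ b = Sum.inl p ∧ inc p l) := h
    have hxb : x.isLeft ≠ b.isLeft := by
      rcases h' with ⟨p, l, rfl, rfl, -⟩ | ⟨p, l, rfl, rfl, -⟩ <;> simp
    rw [Walk.length_cons, Nat.even_add_one, ih]
    cases hb : b.isLeft <;> cases hy : y.isLeft <;> simp_all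

end DomFixAux

open DomFixAux in
/-- If a domestic collineation of a thick generalised `2m`-gon fixes a point `p₀` and a line
`L₀` with `d(p₀, L₀) = 2m − 1`, then either all lines through `p₀` are fixed or all points
on `L₀` are fixed. -/
theorem domestic_fix_near_opposite_flag {P L : Type*} (m : ℕ) (hm : 1 ≤ m)
    (inc : P → L → Prop) (s t : ℕ) (hpoly : IsGenPolygon (2 * m) inc)
    (hthick : IsThick inc) (hparams : HasParams inc s t)
    (θP : Equiv.Perm P) (θL : Equiv.Perm L) (hcoll : IsCollineation inc θP θL)
    (hdom : IsDomesticColl inc (2 * m) θP θL)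
    (p₀ : P) (L₀ : L) (hp₀ : θP p₀ = p₀) (hL₀ : θL L₀ = L₀)
    (hdist : (incGraph inc).dist (Sum.inl p₀) (Sum.inr L₀) = 2 * m - 1) :
    (∀ l : L, inc p₀ l → θL l = l) ∨ (∀ p : P, inc p L₀ → θP p = p) := by
  classical
  haveI : DecidableEq (P ⊕ L) := Classical.decEq _
  by_contra hcon
  rw [not_or] at hcon
  obtain ⟨hc1, hc2⟩ := hcon
  push_neg at hc1 hc2
  obtain ⟨Ml, hMl, hMlne⟩ := hc1
  obtain ⟨qp, hqp, hqpne⟩ := hc2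
  set G := incGraph inc with hGdef
  have hconn : G.Connected := hpoly.connected
  have hN : ∀ {a : P ⊕ L} (w : G.Walk a a), w.IsCycle → 4 * m ≤ w.length := by
    intro a w hw
    have h2 : G.girth = 2 * (2 * m) := hpoly.girth_eq
    have := girth_le_of_isCycle hw
    omega
  have hadj_pl : ∀ (p : P) (l : L), inc p l → G.Adj (Sum.inl p) (Sum.inr l) :=
    fun p l h => Or.inl ⟨p, l, rfl, rfl, h⟩
  -- the collineation as a graph homomorphism, with inverse
  set fh : G →g G :=
    { toFun := Sum.map θP θL
      map_rel' := by
        rintro x y (⟨p, l, rfl, rfl, h⟩ | ⟨p, l, rfl, rfl, h⟩)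
        · exact Or.inl ⟨θP p, θL l, rfl, rfl, (hcoll p l).1 h⟩
        · exact Or.inr ⟨θP p, θL l, rfl, rfl, (hcoll p l).1 h⟩ } with hfhdef
  set gh : G →g G :=
    { toFun := Sum.map θP.symm θL.symm
      map_rel' := by
        rintro x y (⟨p, l, rfl, rfl, h⟩ | ⟨p, l, rfl, rfl, h⟩)
        · refine Or.inl ⟨θP.symm p, θL.symm l, rfl, rfl, ?_⟩
          have h2 := (hcoll (θP.symm p) (θL.symm l)).2
          simp only [Equiv.apply_symm_apply] at h2
          exact h2 h
        · refine Or.inr ⟨θP.symm p, θL.symm l, rfl, rfl, ?_⟩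
          have h2 := (hcoll (θP.symm p) (θL.symm l)).2
          simp only [Equiv.apply_symm_apply] at h2
          exact h2 h } with hghdef
  have hfh_inl : ∀ p : P, fh (Sum.inl p) = Sum.inl (θP p) := fun _ => rfl
  have hfh_inr : ∀ l : L, fh (Sum.inr l) = Sum.inr (θL l) := fun _ => rfl
  have hgf : ∀ x, gh (fh x) = x := by
    rintro (p | l)
    · show Sum.inl (θP.symm (θP p)) = Sum.inl p
      rw [Equiv.symm_apply_apply]
    · show Sum.inr (θL.symm (θL l)) = Sum.inr l
      rw [Equiv.symm_apply_apply]
  have hfd : ∀ x y, G.dist (fh x) (fh y) = G.dist x y := by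
    intro x y
    apply le_antisymm
    · obtain ⟨Wxy, -, hlen⟩ := hconn.exists_path_of_dist x y
      have := SimpleGraph.dist_le (Wxy.map fh)
      rw [Walk.length_map, hlen] at this
      exact this
    · obtain ⟨Wxy, -, hlen⟩ := hconn.exists_path_of_dist (fh x) (fh y)
      have := SimpleGraph.dist_le ((Wxy.map gh).copy (hgf x) (hgf y))
      rw [Walk.length_copy, Walk.length_map, hlen] at this
      exact this
  have hfinj : Function.Injective fh := by
    intro a b hab
    have := congrArg gh hab
    rwa [hgf, hgf] at this
  have hfhp₀ : fh (Sum.inl p₀) = Sum.inl p₀ := by rw [hfh_inl, hp₀]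
  have hfhL₀ : fh (Sum.inr L₀) = Sum.inr L₀ := by rw [hfh_inr, hL₀]
  -- parity of distances
  have hparity : ∀ x y : P ⊕ L, Even (G.dist x y) ↔ (x.isLeft = y.isLeft) := by
    intro x y
    obtain ⟨Wp, -, hl⟩ := hconn.exists_path_of_dist x y
    rw [← hl]
    exact incGraph_walk_parity Wp
  have hadj_dist : ∀ {x y : P ⊕ L}, G.Adj x y → G.dist x y ≤ 1 := by
    intro x y h
    have := SimpleGraph.dist_le (Walk.cons h Walk.nil)
    simpa using this
  -- the geodesic Γ from p₀ to L₀ is fixed pointwise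
  obtain ⟨Γ, hΓp, hΓl⟩ := hconn.exists_path_of_dist (Sum.inl p₀) (Sum.inr L₀)
  have hΓlen : Γ.length = 2 * m - 1 := by rw [hΓl, hdist]
  set Γ' : G.Walk (Sum.inl p₀) (Sum.inr L₀) := (Γ.map fh).copy hfhp₀ hfhL₀ with hΓ'def
  have hΓ'p : Γ'.IsPath := by
    rw [hΓ'def, Walk.isPath_copy]
    exact Walk.map_isPath_of_injective hfinj hΓp
  have hΓ'len : Γ'.length = 2 * m - 1 := by
    rw [hΓ'def, Walk.length_copy, Walk.length_map, hΓlen]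
  have hΓfix : Γ' = Γ := by
    by_contra hne
    exact two_paths (4 * m) hN Γ'.length Γ' Γ le_rfl hΓ'p hΓp hne (by omega)
  have hfixΓ : ∀ y ∈ Γ.support, fh y = y := by
    intro y hy
    obtain ⟨j, hje, hjle⟩ := Walk.mem_support_iff_exists_getVert.1 hy
    have h1 : Γ'.getVert j = Γ.getVert j := by rw [hΓfix]
    rw [hΓ'def, Walk.getVert_copy, getVert_map] at h1
    rw [← hje]
    exact h1
  -- d(p₀, q) = 2m
  have hq2m : G.dist (Sum.inl p₀) (Sum.inl qp) = 2 * m := by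
    have hub : G.dist (Sum.inl p₀) (Sum.inl qp) ≤ 2 * m := hpoly.dist_le _ _
    have htri : G.dist (Sum.inl p₀) (Sum.inr L₀) ≤
        G.dist (Sum.inl p₀) (Sum.inl qp) + G.dist (Sum.inl qp) (Sum.inr L₀) :=
      hconn.dist_triangle
    have hqL : G.dist (Sum.inl qp) (Sum.inr L₀) ≤ 1 := hadj_dist (hadj_pl qp L₀ hqp)
    obtain ⟨r, hr⟩ := (hparity (Sum.inl p₀) (Sum.inl qp)).2 rfl
    by_contra hne22
    have hd22 : G.dist (Sum.inl p₀) (Sum.inl qp) = 2 * m - 2 := by omega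
    obtain ⟨D, hDp, hDl⟩ := hconn.exists_path_of_dist (Sum.inl p₀) (Sum.inl qp)
    have hL₀D : (Sum.inr L₀ : P ⊕ L) ∉ D.support := by
      intro hmem
      have hd1 := SimpleGraph.dist_le (D.takeUntil _ hmem)
      have hd2 := Walk.length_takeUntil_le D hmem
      omega
    set D' : G.Walk (Sum.inl p₀) (Sum.inr L₀) :=
      D.append (Walk.cons (hadj_pl qp L₀ hqp) Walk.nil) with hD'def
    have hD'p : D'.IsPath := by
      rw [hD'def, Walk.isPath_def, Walk.support_append, Walk.support_cons,
        Walk.support_nil, List.tail_cons, List.nodup_append]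
      refine ⟨(Walk.isPath_def _).1 hDp, List.nodup_singleton _, ?_⟩
      intro y hy z hy' hyz
      rw [List.mem_singleton] at hy'
      subst hy'
      subst hyz
      exact hL₀D hy
    have hD'len : D'.length = 2 * m - 1 := by
      rw [hD'def]
      simp only [Walk.length_append, Walk.length_cons, Walk.length_nil]
      omega
    have hqD' : (Sum.inl qp : P ⊕ L) ∈ D'.support := by
      rw [hD'def, Walk.support_append, List.mem_append]
      exact Or.inl D.end_mem_support
    have hD'ne : D' ≠ Γ := by
      intro he
      rw [he] at hqD'
      have hfix := hfixΓ _ hqD'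
      rw [hfh_inl] at hfix
      exact hqpne (Sum.inl.inj hfix)
    exact two_paths (4 * m) hN D'.length D' Γ le_rfl hD'p hΓp hD'ne (by omega)
  -- d(Ml, L₀) = 2m
  have hM2m : G.dist (Sum.inr Ml) (Sum.inr L₀) = 2 * m := by
    have hub : G.dist (Sum.inr Ml) (Sum.inr L₀) ≤ 2 * m := hpoly.dist_le _ _
    have htri : G.dist (Sum.inl p₀) (Sum.inr L₀) ≤
        G.dist (Sum.inl p₀) (Sum.inr Ml) + G.dist (Sum.inr Ml) (Sum.inr L₀) :=
      hconn.dist_triangle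
    have hpM : G.dist (Sum.inl p₀) (Sum.inr Ml) ≤ 1 := hadj_dist (hadj_pl p₀ Ml hMl)
    obtain ⟨r, hr⟩ := (hparity (Sum.inr Ml) (Sum.inr L₀)).2 rfl
    by_contra hne22
    have hd22 : G.dist (Sum.inr Ml) (Sum.inr L₀) = 2 * m - 2 := by omega
    obtain ⟨D, hDp, hDl⟩ := hconn.exists_path_of_dist (Sum.inr Ml) (Sum.inr L₀)
    have hp₀D : (Sum.inl p₀ : P ⊕ L) ∉ D.support := by
      intro hmem
      have hd1 := SimpleGraph.dist_le (D.dropUntil _ hmem)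
      have hd2 := Walk.length_dropUntil_le D hmem
      omega
    set D' : G.Walk (Sum.inl p₀) (Sum.inr L₀) :=
      Walk.cons (hadj_pl p₀ Ml hMl) D with hD'def
    have hD'p : D'.IsPath := Walk.IsPath.cons hDp hp₀D
    have hD'len : D'.length = 2 * m - 1 := by
      rw [hD'def, Walk.length_cons]
      omega
    have hMD' : (Sum.inr Ml : P ⊕ L) ∈ D'.support := by
      rw [hD'def, Walk.support_cons, List.mem_cons]
      exact Or.inr D.start_mem_support
    have hD'ne : D' ≠ Γ := by
      intro he
      rw [he] at hMD'
      have hfix := hfixΓ _ hMD'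
      rw [hfh_inr] at hfix
      exact hMlne (Sum.inr.inj hfix)
    exact two_paths (4 * m) hN D'.length D' Γ le_rfl hD'p hΓp hD'ne (by omega)
  -- d(q, Ml) = 2m - 1
  have hqM : G.dist (Sum.inl qp) (Sum.inr Ml) = 2 * m - 1 := by
    have hub : G.dist (Sum.inl qp) (Sum.inr Ml) ≤ 2 * m := hpoly.dist_le _ _
    have hodd : ¬ Even (G.dist (Sum.inl qp) (Sum.inr Ml)) := by
      rw [hparity]; simp
    rw [Nat.even_iff] at hodd
    have htri : G.dist (Sum.inl p₀) (Sum.inl qp) ≤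
        G.dist (Sum.inl p₀) (Sum.inr Ml) + G.dist (Sum.inr Ml) (Sum.inl qp) :=
      hconn.dist_triangle
    have hpM : G.dist (Sum.inl p₀) (Sum.inr Ml) ≤ 1 := hadj_dist (hadj_pl p₀ Ml hMl)
    have hcomm : G.dist (Sum.inr Ml) (Sum.inl qp) = G.dist (Sum.inl qp) (Sum.inr Ml) :=
      SimpleGraph.dist_comm
    omega
  -- the geodesic W from q to Ml
  obtain ⟨W, hWp, hWl⟩ := hconn.exists_path_of_dist (Sum.inl qp) (Sum.inr Ml)
  have hWlen : W.length = 2 * m - 1 := by rw [hWl, hqM]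
  have hWd : ∀ j, j ≤ W.length →
      G.dist (Sum.inl qp) (W.getVert j) = j ∧
      G.dist (W.getVert j) (Sum.inr Ml) = W.length - j :=
    fun j hj => dist_getVert_of_geodesic hconn W hWl hj
  have hdp₀ : ∀ j, j ≤ W.length → G.dist (Sum.inl p₀) (W.getVert j) = 2 * m - j := by
    intro j hj
    obtain ⟨e1, e2⟩ := hWd j hj
    have t1 : G.dist (Sum.inl p₀) (Sum.inl qp) ≤
        G.dist (Sum.inl p₀) (W.getVert j) + G.dist (W.getVert j) (Sum.inl qp) :=
      hconn.dist_triangle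
    have t2 : G.dist (Sum.inl p₀) (W.getVert j) ≤
        G.dist (Sum.inl p₀) (Sum.inr Ml) + G.dist (Sum.inr Ml) (W.getVert j) :=
      hconn.dist_triangle
    have c1 : G.dist (W.getVert j) (Sum.inl qp) = j := by
      rw [SimpleGraph.dist_comm]; exact e1
    have c2 : G.dist (Sum.inr Ml) (W.getVert j) = W.length - j := by
      rw [SimpleGraph.dist_comm]; exact e2
    have hpM : G.dist (Sum.inl p₀) (Sum.inr Ml) ≤ 1 := hadj_dist (hadj_pl p₀ Ml hMl)
    omega
  have hdL₀ : ∀ j, j ≤ W.length → G.dist (Sum.inr L₀) (W.getVert j) = j + 1 := by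
    intro j hj
    obtain ⟨e1, e2⟩ := hWd j hj
    have t1 : G.dist (Sum.inr L₀) (Sum.inr Ml) ≤
        G.dist (Sum.inr L₀) (W.getVert j) + G.dist (W.getVert j) (Sum.inr Ml) :=
      hconn.dist_triangle
    have t2 : G.dist (Sum.inr L₀) (W.getVert j) ≤
        G.dist (Sum.inr L₀) (Sum.inl qp) + G.dist (Sum.inl qp) (W.getVert j) :=
      hconn.dist_triangle
    have hqL : G.dist (Sum.inr L₀) (Sum.inl qp) ≤ 1 :=
      hadj_dist (hadj_pl qp L₀ hqp).symm
    have hLM : G.dist (Sum.inr L₀) (Sum.inr Ml) = 2 * m := by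
      rw [SimpleGraph.dist_comm]; exact hM2m
    omega
  -- first application of the master lemma : index m-1 from the q side
  have hA := master hconn hN fh hfd hfinj W hWl hfhL₀ ((hadj_pl qp L₀ hqp).symm)
    (fun j hj heq => by
      have := hdL₀ j hj
      rw [heq, SimpleGraph.dist_self] at this
      omega)
    (fun j k hj hk heq => by
      have a1 := hdp₀ j hj
      have a2 : G.dist (Sum.inl p₀) (fh (W.getVert k)) = 2 * m - k := by
        rw [← hfhp₀, hfd]; exact hdp₀ k hk
      rw [heq] at a1
      omega)
    (by rw [hfh_inl]; intro hcontr; exact hqpne (Sum.inl.inj hcontr))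
    (m - 1) (by omega) (by omega)
  -- second application : index m-1 from the Ml side, along the reversed geodesic
  have hWrgeo : W.reverse.length = G.dist (Sum.inr Ml) (Sum.inl qp) := by
    rw [Walk.length_reverse, hWl, SimpleGraph.dist_comm]
  have hB0 := master hconn hN fh hfd hfinj W.reverse hWrgeo hfhp₀
    (hadj_pl p₀ Ml hMl)
    (fun j hj heq => by
      rw [Walk.length_reverse] at hj
      rw [Walk.getVert_reverse] at heq
      have := hdp₀ (W.length - j) (by omega)
      rw [heq, SimpleGraph.dist_self] at this
      omega)
    (fun j k hj hk heq => by
      rw [Walk.length_reverse] at hj hk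
      rw [Walk.getVert_reverse, Walk.getVert_reverse] at heq
      have a1 := hdL₀ (W.length - j) (by omega)
      have a2 : G.dist (Sum.inr L₀) (fh (W.getVert (W.length - k))) =
          (W.length - k) + 1 := by
        rw [← hfhL₀, hfd]; exact hdL₀ (W.length - k) (by omega)
      rw [heq] at a1
      omega)
    (by rw [hfh_inr]; intro hcontr; exact hMlne (Sum.inr.inj hcontr))
    (m - 1) (by rw [Walk.length_reverse]; omega) (by omega)
  rw [Walk.getVert_reverse] at hB0
  have hidx : W.length - (m - 1) = m := by omega
  rw [hidx] at hB0
  -- the chamber in the middle is mapped to an opposite chamber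
  have hadjz : G.Adj (W.getVert (m - 1)) (W.getVert m) := by
    have h1 := W.adj_getVert_succ (i := m - 1) (by omega)
    have hidx2 : m - 1 + 1 = m := by omega
    rwa [hidx2] at h1
  have hadjz' : (∃ p l, W.getVert (m - 1) = Sum.inl p ∧ W.getVert m = Sum.inr l ∧ inc p l) ∨
      (∃ p l, W.getVert (m - 1) = Sum.inr l ∧ W.getVert m = Sum.inl p ∧ inc p l) := hadjz
  refine hdom ?_
  rcases hadjz' with ⟨p', l', hzp, hzl, hinc⟩ | ⟨p', l', hzp, hzl, hinc⟩
  · refine ⟨p', l', hinc, Or.inl ⟨?_, ?_⟩⟩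
    · have h1 := hA
      rw [hzp, hfh_inl] at h1
      show G.dist (Sum.inl p') (Sum.inl (θP p')) = 2 * m
      omega
    · have h1 := hB0
      rw [hzl, hfh_inr] at h1
      show G.dist (Sum.inr l') (Sum.inr (θL l')) = 2 * m
      omega
  · refine ⟨p', l', hinc, Or.inl ⟨?_, ?_⟩⟩
    · have h1 := hB0
      rw [hzl, hfh_inl] at h1
      show G.dist (Sum.inl p') (Sum.inl (θP p')) = 2 * m
      omega
    · have h1 := hA
      rw [hzp, hfh_inr] at h1
      show G.dist (Sum.inr l') (Sum.inr (θL l')) = 2 * m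
      omega
end

section
/- Let S be an ovoidal subspace of a generalised 2n-gon. If x and y are points of S with d(x,y) < 2n, then every element on the unique geodesic joining x and y belongs to S. -/
open SimpleGraph

/-- A subspace of a point-line geometry: closed under lines joining distinct collinear
points of the subspace, and containing all points of each of its lines. -/
def IsSubspace {P L : Type*} (inc : P → L → Prop) (S : Set (P ⊕ L)) : Prop :=
  (∀ p q : P, p ≠ q → Sum.inl p ∈ S → Sum.inl q ∈ S →
    ∀ l : L, inc p l → inc q l → Sum.inr l ∈ S) ∧
  (∀ l : L, Sum.inr l ∈ S → ∀ p : P, inc p l → Sum.inl p ∈ S)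

/-- An ovoidal subspace of a generalised `2n`-gon: a subspace such that every element is at
distance at most `n` from the subspace, and every element at distance less than `n` from
the subspace is at minimal distance from a unique element of the subspace. -/
def IsOvoidal {P L : Type*} (inc : P → L → Prop) (n : ℕ) (S : Set (P ⊕ L)) : Prop :=
  IsSubspace inc S ∧
  (∀ x : P ⊕ L, ∃ y ∈ S, (incGraph inc).dist x y ≤ n) ∧
  (∀ x : P ⊕ L, (∃ y ∈ S, (incGraph inc).dist x y < n) →
    ∃! z : P ⊕ L, z ∈ S ∧ ∀ y ∈ S, (incGraph inc).dist x z ≤ (incGraph inc).dist x y)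


namespace OvoidAux
variable {V : Type*} {G : SimpleGraph V}


variable {V : Type*} {G : SimpleGraph V}

/-- Distance between two vertices of a walk is at most their index difference. -/
lemma dist_getVert_le (hc : G.Connected) {u v : V} (w : G.Walk u v)
    {i j : ℕ} (hij : i ≤ j) (hj : j ≤ w.length) :
    G.dist (w.getVert i) (w.getVert j) ≤ j - i := by
  induction j, hij using Nat.le_induction with
  | base => simp
  | succ j hij ih =>
    have h1 : G.dist (w.getVert j) (w.getVert (j + 1)) ≤ 1 := by
      have hadj := w.adj_getVert_succ (by omega : j < w.length)
      exact le_of_eq (SimpleGraph.dist_eq_one_iff_adj.mpr hadj)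
    have h2 := ih (by omega)
    have h3 := hc.dist_triangle (u := w.getVert i) (v := w.getVert j) (w := w.getVert (j + 1))
    omega

/-- Distances along a geodesic walk. -/
lemma geodesic_dist (hc : G.Connected) {u v : V} {w : G.Walk u v}
    (hw : w.length = G.dist u v) {i j : ℕ} (hij : i ≤ j) (hj : j ≤ w.length) :
    G.dist u (w.getVert i) = i ∧ G.dist (w.getVert i) (w.getVert j) = j - i ∧
      G.dist (w.getVert j) v = w.length - j := by
  have h0 : G.dist (w.getVert 0) (w.getVert i) ≤ i - 0 :=
    dist_getVert_le hc w (by omega) (by omega)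
  rw [w.getVert_zero] at h0
  have h1 : G.dist (w.getVert i) (w.getVert j) ≤ j - i := dist_getVert_le hc w hij hj
  have h2 : G.dist (w.getVert j) (w.getVert w.length) ≤ w.length - j :=
    dist_getVert_le hc w hj le_rfl
  rw [w.getVert_length] at h2
  have t1 := hc.dist_triangle (u := u) (v := w.getVert i) (w := v)
  have t2 := hc.dist_triangle (u := w.getVert i) (v := w.getVert j) (w := v)
  omega

/-- If `x` lies on a walk from `u` to `v`, then `d(u,x) + d(x,v)` is at most its length. -/
lemma support_dist_le {u v : V} (p : G.Walk u v) {x : V} (hx : x ∈ p.support) :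
    G.dist u x + G.dist x v ≤ p.length := by
  classical
  have h1 := SimpleGraph.dist_le (p.takeUntil x hx)
  have h2 := SimpleGraph.dist_le (p.dropUntil x hx)
  have h3 : (p.takeUntil x hx).length + (p.dropUntil x hx).length = p.length := by
    rw [← SimpleGraph.Walk.length_append, SimpleGraph.Walk.take_spec]
  omega

lemma not_mem_edges_left {u v : V} {p : G.Walk u v} {x : V} (hx : x ∉ p.support) (y : V) :
    s(x, y) ∉ p.edges := fun h => hx (p.fst_mem_support_of_mem_edges h)

/-- A graph with girth `gg ≠ 0` admits no "shortcut" cycles: an edge together with a walk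
back avoiding that edge has total length at least the girth. -/
lemma girth_le_of_walk {gg : ℕ} (hg : G.girth = gg) (h0 : gg ≠ 0) {x a : V}
    (h : G.Adj x a) (W : G.Walk a x) (he : s(x, a) ∉ W.edges) :
    gg ≤ W.length + 1 := by
  classical
  have hcyc : (SimpleGraph.Walk.cons h W.bypass).IsCycle := by
    rw [SimpleGraph.Walk.cons_isCycle_iff]
    exact ⟨W.bypass_isPath, fun hmem => he (W.edges_bypass_subset hmem)⟩
  have htop : G.egirth ≠ ⊤ := by
    intro ht
    rw [SimpleGraph.girth, ht] at hg
    simp at hg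
    omega
  have hE : G.egirth = (gg : ℕ∞) := by
    rw [← hg, SimpleGraph.girth, ENat.coe_toNat htop]
  have hle : G.egirth ≤ ((SimpleGraph.Walk.cons h W.bypass).length : ℕ∞) := by
    refine iInf_le_of_le x (iInf_le_of_le _ (iInf_le _ hcyc))
  rw [hE, Nat.cast_le] at hle
  have h2 : (SimpleGraph.Walk.cons h W.bypass).length = W.bypass.length + 1 := rfl
  have h3 := W.length_bypass_le
  omega

/-- Uniqueness of the predecessor on geodesics shorter than half the girth. -/
lemma unique_pred (hc : G.Connected) {gg : ℕ} (hg : G.girth = gg) (h0 : gg ≠ 0)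
    {u v a₁ a₂ : V} (h1 : G.Adj v a₁) (h2 : G.Adj v a₂)
    (hd1 : G.dist u a₁ + 1 = G.dist u v) (hd2 : G.dist u a₂ + 1 = G.dist u v)
    (hlt : 2 * G.dist u v < gg) : a₁ = a₂ := by
  by_contra hne
  obtain ⟨p₁, hp₁, hl₁⟩ := hc.exists_path_of_dist u a₁
  obtain ⟨p₂, hp₂, hl₂⟩ := hc.exists_path_of_dist u a₂
  have hv1 : v ∉ p₁.support := by
    intro hmem
    have hd := support_dist_le p₁ hmem
    have hp := hc.pos_dist_of_ne h1.ne
    omega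
  have hv2 : v ∉ p₂.support := by
    intro hmem
    have hd := support_dist_le p₂ hmem
    have hp := hc.pos_dist_of_ne h2.ne
    omega
  set W : G.Walk a₁ v :=
    p₁.reverse.append (p₂.append (SimpleGraph.Walk.cons h2.symm SimpleGraph.Walk.nil)) with hW
  have he : s(v, a₁) ∉ W.edges := by
    intro hmem
    rw [hW, SimpleGraph.Walk.edges_append, SimpleGraph.Walk.edges_append] at hmem
    simp only [List.mem_append, SimpleGraph.Walk.edges_reverse, List.mem_reverse,
      SimpleGraph.Walk.edges_cons, SimpleGraph.Walk.edges_nil, List.mem_singleton] at hmem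
    rcases hmem with hmem | hmem | hmem
    · exact hv1 (p₁.fst_mem_support_of_mem_edges hmem)
    · exact hv2 (p₂.fst_mem_support_of_mem_edges hmem)
    · rw [Sym2.eq_iff] at hmem
      rcases hmem with ⟨_, h⟩ | ⟨_, h⟩
      · exact h1.ne' h
      · exact hne h
  have hgirth := girth_le_of_walk hg h0 h1 W he
  have hlen : W.length = p₁.length + (p₂.length + 1) := by
    rw [hW, SimpleGraph.Walk.length_append, SimpleGraph.Walk.length_append,
      SimpleGraph.Walk.length_reverse]
    rfl
  omega

/-- Uniqueness of points of the interval between `u` and `v`, given distances. -/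
lemma interval_unique (hc : G.Connected) {gg : ℕ} (hg : G.girth = gg) (h0 : gg ≠ 0)
    {u v : V} (hlt : 2 * G.dist u v < gg) :
    ∀ b z z', G.dist z v = b → G.dist u z + G.dist z v = G.dist u v →
      G.dist z' v = b → G.dist u z' + G.dist z' v = G.dist u v → z = z' := by
  intro b
  induction b using Nat.strong_induction_on with
  | _ b ih =>
    intro z z' hb hz hb' hz'
    rcases Nat.eq_zero_or_pos b with hb0 | hbpos
    · subst hb0
      rw [hc.dist_eq_zero_iff] at hb hb'
      rw [hb, hb']
    · obtain ⟨r, hr, hrl⟩ := hc.exists_path_of_dist z v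
      obtain ⟨r', hr', hrl'⟩ := hc.exists_path_of_dist z' v
      rw [hb] at hrl
      rw [hb'] at hrl'
      -- successors
      have hsucc : ∀ (zz : V) (s : G.Walk zz v), s.length = b → G.dist zz v = b →
          G.dist u zz + b = G.dist u v →
          G.Adj zz (s.getVert 1) ∧ G.dist (s.getVert 1) v = b - 1 ∧
            G.dist u (s.getVert 1) = G.dist u zz + 1 := by
        intro zz s hsl hdzz hsum
        have hadj : G.Adj zz (s.getVert 1) := by
          have := s.adj_getVert_succ (by omega : 0 < s.length)
          rwa [s.getVert_zero] at this
        have hgd := geodesic_dist hc (w := s) (by omega) (le_refl 1) (by omega)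
        have hlast : G.dist (s.getVert 1) v = b - 1 := by rw [hgd.2.2, hsl]
        have hup : G.dist u (s.getVert 1) ≤ G.dist u zz + 1 := by
          have ht := hc.dist_triangle (u := u) (v := zz) (w := s.getVert 1)
          have := SimpleGraph.dist_eq_one_iff_adj.mpr hadj
          omega
        have hlow := hc.dist_triangle (u := u) (v := s.getVert 1) (w := v)
        exact ⟨hadj, hlast, by omega⟩
      obtain ⟨ha1, hb1, hc1⟩ := hsucc z r hrl hb (by omega)
      obtain ⟨ha2, hb2, hc2⟩ := hsucc z' r' hrl' hb' (by omega)
      have heqz : G.dist u z = G.dist u z' := by omega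
      have hmid : r.getVert 1 = r'.getVert 1 := by
        apply ih (b - 1) (by omega)
        · exact hb1
        · omega
        · exact hb2
        · omega
      have hltw : 2 * G.dist u (r.getVert 1) < gg := by
        have := hc.dist_triangle (u := u) (v := r.getVert 1) (w := v)
        omega
      have := unique_pred hc hg h0 (u := u) (v := r.getVert 1)
        ha1.symm (hmid ▸ ha2.symm) (by omega) (by omega) hltw
      exact this



/-- Key girth argument: if a geodesic from `m₀` to `z₀` starts in a direction different
from the one towards `u`, then `d(u, z₀) = d(u, m₀) + d(m₀, z₀)`. -/
lemma side_dist (hc : G.Connected) {gg : ℕ} (hg : G.girth = gg) (h0 : gg ≠ 0)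
    {u m₀ mm z₀ : V} {k j : ℕ}
    (hum : G.dist u m₀ = k) (hum' : G.dist u mm = k - 1) (hadjm : G.Adj mm m₀)
    (hmz : G.dist m₀ z₀ = j)
    (hj : 1 ≤ j) (hk : 1 ≤ k) (hgg2 : 2 * k + 2 * j ≤ gg)
    (g : G.Walk m₀ z₀) (hgp : g.IsPath) (hgl : g.length = j)
    (hne : g.getVert 1 ≠ mm) :
    G.dist u z₀ = k + j := by
  classical
  have hub : G.dist u z₀ ≤ k + j := by
    have := hc.dist_triangle (u := u) (v := m₀) (w := z₀)
    omega
  by_contra hne'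
  have hlb : G.dist u z₀ ≤ k + j - 1 := by omega
  obtain ⟨p, hpp, hpl⟩ := hc.exists_path_of_dist u z₀
  obtain ⟨q, hqp, hql⟩ := hc.exists_path_of_dist u mm
  have hnil : ¬ g.Nil := by
    rw [SimpleGraph.Walk.not_nil_iff_lt_length]
    omega
  have hadj1 : G.Adj m₀ (g.getVert 1) := g.adj_snd hnil
  have hdecomp := SimpleGraph.Walk.cons_tail_eq g hnil
  have htail : g.tail.IsPath ∧ m₀ ∉ g.tail.support := by
    rw [← hdecomp, SimpleGraph.Walk.cons_isPath_iff] at hgp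
    exact hgp
  have htl : g.tail.length + 1 = g.length := SimpleGraph.Walk.length_tail_add_one hnil
  set W : G.Walk (g.getVert 1) m₀ :=
    g.tail.append (p.reverse.append (q.append (SimpleGraph.Walk.cons hadjm SimpleGraph.Walk.nil)))
    with hW
  have hmp : m₀ ∉ p.support := by
    intro hmem
    have := support_dist_le p hmem
    omega
  have hmq : m₀ ∉ q.support := by
    intro hmem
    have := support_dist_le q hmem
    omega
  have he : s(m₀, g.getVert 1) ∉ W.edges := by
    intro hmem
    rw [hW, SimpleGraph.Walk.edges_append, SimpleGraph.Walk.edges_append,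
      SimpleGraph.Walk.edges_append] at hmem
    simp only [List.mem_append, SimpleGraph.Walk.edges_reverse, List.mem_reverse,
      SimpleGraph.Walk.edges_cons, SimpleGraph.Walk.edges_nil, List.mem_singleton] at hmem
    rcases hmem with hmem | hmem | hmem | hmem
    · exact htail.2 (g.tail.fst_mem_support_of_mem_edges hmem)
    · exact hmp (p.fst_mem_support_of_mem_edges hmem)
    · exact hmq (q.fst_mem_support_of_mem_edges hmem)
    · rw [Sym2.eq_iff] at hmem
      rcases hmem with ⟨h1, _⟩ | ⟨_, h2⟩
      · exact hadjm.ne' h1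
      · exact hne h2
  have hgirth := girth_le_of_walk hg h0 hadj1 W he
  have hlen : W.length = g.tail.length + (p.length + (q.length + 1)) := by
    rw [hW, SimpleGraph.Walk.length_append, SimpleGraph.Walk.length_append,
      SimpleGraph.Walk.length_append, SimpleGraph.Walk.length_reverse]
    rfl
  omega

end OvoidAux

/-- Unfold adjacency in the incidence graph. -/
lemma OvoidAux.adj_cases {P L : Type*} {inc : P → L → Prop} {a b : P ⊕ L}
    (h : (incGraph inc).Adj a b) :
    (∃ p l, a = Sum.inl p ∧ b = Sum.inr l ∧ inc p l) ∨
      (∃ p l, a = Sum.inr l ∧ b = Sum.inl p ∧ inc p l) := h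

/-- Adjacent vertices of the incidence graph lie on different sides. -/
lemma OvoidAux.incGraph_parity {P L : Type*} {inc : P → L → Prop} :
    ∀ {u v : P ⊕ L} (w : (incGraph inc).Walk u v), Even w.length ↔ (u.isLeft = v.isLeft) := by
  intro u v w
  induction w with
  | nil => simp
  | cons h p ih =>
    rw [SimpleGraph.Walk.length_cons, Nat.even_add_one, ih]
    rcases h with ⟨p', l', rfl, rfl, _⟩ | ⟨p', l', rfl, rfl, _⟩ <;>
      rcases v with xv | lv <;> simp

/-- The main lemma: the interval between any two elements of an ovoidal subspace at
distance less than `2 n` is contained in the subspace. -/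
lemma OvoidAux.main {P L : Type*} {n : ℕ} (hn : 1 ≤ n) {inc : P → L → Prop}
    (hpoly : IsGenPolygon (2 * n) inc) {S : Set (P ⊕ L)} (hS : IsOvoidal inc n S) :
    ∀ d : ℕ, ∀ u v : P ⊕ L, u ∈ S → v ∈ S → (incGraph inc).dist u v = d → d < 2 * n →
      ∀ z, (incGraph inc).dist u z + (incGraph inc).dist z v = d → z ∈ S := by
  classical
  set G := incGraph inc with hG
  have hc : G.Connected := hpoly.connected
  have hg : G.girth = 2 * (2 * n) := hpoly.girth_eq
  have h0 : 2 * (2 * n) ≠ 0 := by omega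
  intro d
  induction d using Nat.strong_induction_on with
  | _ d ih =>
  intro u v hu hv hd hlt z hz
  rcases Nat.eq_zero_or_pos (G.dist u z) with ha0 | ha1
  · rw [hc.dist_eq_zero_iff] at ha0; rwa [← ha0]
  rcases Nat.eq_zero_or_pos (G.dist z v) with hb0 | hb1
  · rw [hc.dist_eq_zero_iff] at hb0; rwa [hb0]
  have hd2 : 2 ≤ d := by omega
  obtain ⟨w, hwp, hwl0⟩ := hc.exists_path_of_dist u v
  have hwl : w.length = d := by rw [hwl0, hd]
  -- an interior element of the interval belonging to S
  have hm : ∃ m ∈ S, G.dist u m + G.dist m v = d ∧ 1 ≤ G.dist u m ∧ G.dist u m < d := by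
    have hadj0 : G.Adj u (w.getVert 1) := by
      have := w.adj_getVert_succ (by omega : 0 < w.length)
      rwa [w.getVert_zero] at this
    have hadjlast : G.Adj (w.getVert (d - 1)) v := by
      have := w.adj_getVert_succ (by omega : d - 1 < w.length)
      rwa [show d - 1 + 1 = w.length from by omega, w.getVert_length] at this
    have hgd1 := OvoidAux.geodesic_dist hc hwl0 (le_refl 1) (by omega : 1 ≤ w.length)
    have hgdl := OvoidAux.geodesic_dist hc hwl0 (le_refl (d - 1)) (by omega : d - 1 ≤ w.length)
    rcases u with xu | lu
    · rcases v with xv | lv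
      · -- both endpoints are points
        have hev : Even d := by
          have h := OvoidAux.incGraph_parity (inc := inc) w
          rw [hwl] at h
          simpa using h
        obtain ⟨k, hk⟩ := hev
        have hk1 : 1 ≤ k := by omega
        by_cases hk2 : k = 1
        · -- distance 2 : the joining line is in S
          subst hk2
          rcases OvoidAux.adj_cases hadj0 with ⟨p, l, h1, h2, h3⟩ | ⟨p, l, h1, h2, h3⟩
          · rw [show d - 1 = 1 from by omega] at hadjlast
            rcases OvoidAux.adj_cases hadjlast with ⟨p', l', hh1, hh2, hh3⟩ |
              ⟨p', l', hh1, hh2, hh3⟩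
            · rw [h2] at hh1; exact absurd hh1 (by simp)
            · have hp : p = xu := (Sum.inl.inj h1).symm
              have hp' : p' = xv := (Sum.inl.inj hh2).symm
              have hl : l = l' := by rw [h2] at hh1; exact Sum.inr.inj hh1
              have hne : xu ≠ xv := by
                intro hcon
                rw [hcon] at hd
                rw [SimpleGraph.dist_self] at hd
                omega
              refine ⟨w.getVert 1, ?_, ?_, ?_, ?_⟩
              · rw [h2]
                exact hS.1.1 xu xv hne hu hv l (by rw [← hp]; exact h3)
                  (by rw [hl, ← hp']; exact hh3)
              · have ha := hgd1.1
                have hb := hgd1.2.2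
                omega
              · have ha := hgd1.1
                omega
              · have ha := hgd1.1
                omega
          · exact absurd h1 (by simp)
        · -- distance at least 4 : use the ovoidal property at the middle element
          have hk2' : 2 ≤ k := by omega
          have hgdk := OvoidAux.geodesic_dist hc hwl0 (le_refl k) (by omega : k ≤ w.length)
          have hdu : G.dist (Sum.inl xu) (w.getVert k) = k := hgdk.1
          have hdv : G.dist (w.getVert k) (Sum.inl xv) = k := by
            have h3 := hgdk.2.2
            omega
          have hkn : k < n := by omega
          obtain ⟨z₀, hz₀, huniq⟩ := hS.2.2 (w.getVert k)
            ⟨Sum.inl xu, hu, by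
              show G.dist (w.getVert k) (Sum.inl xu) < n
              rw [SimpleGraph.dist_comm]; omega⟩
          obtain ⟨hz₀S, hz₀min⟩ := hz₀
          have hz₀min' : ∀ y ∈ S, G.dist (w.getVert k) z₀ ≤ G.dist (w.getVert k) y := hz₀min
          have hcomm_u : G.dist (w.getVert k) (Sum.inl xu) = k := by
            rw [SimpleGraph.dist_comm]; exact hdu
          have hjk : G.dist (w.getVert k) z₀ ≤ k := by
            have := hz₀min' (Sum.inl xu) hu
            omega
          rcases Nat.lt_or_ge (G.dist (w.getVert k) z₀) k with hjlt | hjge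
          · rcases Nat.eq_zero_or_pos (G.dist (w.getVert k) z₀) with hj0 | hjpos
            · have hmz : w.getVert k = z₀ := (hc.dist_eq_zero_iff).mp hj0
              exact ⟨w.getVert k, by rw [hmz]; exact hz₀S, by omega, by omega, by omega⟩
            · -- the nearest element of S is strictly nearer : girth argument
              obtain ⟨g, hgp, hgl⟩ := hc.exists_path_of_dist (w.getVert k) z₀
              have hgdk1 := OvoidAux.geodesic_dist hc hwl0 (le_refl (k - 1))
                (by omega : k - 1 ≤ w.length)
              have hgdk2 := OvoidAux.geodesic_dist hc hwl0 (by omega : k - 1 ≤ k + 1)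
                (by omega : k + 1 ≤ w.length)
              have hadjm1 : G.Adj (w.getVert (k - 1)) (w.getVert k) := by
                have := w.adj_getVert_succ (by omega : k - 1 < w.length)
                rwa [show k - 1 + 1 = k from by omega] at this
              have hadjm2 : G.Adj (w.getVert (k + 1)) (w.getVert k) :=
                (w.adj_getVert_succ (by omega : k < w.length)).symm
              have hmS : w.getVert k ∈ S := by
                by_cases hside : g.getVert 1 = w.getVert (k - 1)
                · -- use the `v`-side
                  have hne2 : g.getVert 1 ≠ w.getVert (k + 1) := by
                    rw [hside]
                    intro hcon
                    have h2 := hgdk2.2.1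
                    rw [hcon, SimpleGraph.dist_self] at h2
                    omega
                  have hdvm : G.dist (Sum.inl xv) (w.getVert k) = k := by
                    rw [SimpleGraph.dist_comm]; exact hdv
                  have hdvk : G.dist (Sum.inl xv) (w.getVert (k + 1)) = k - 1 := by
                    rw [SimpleGraph.dist_comm]
                    have := hgdk2.2.2
                    omega
                  have hduz : G.dist (Sum.inl xv) z₀ = k + G.dist (w.getVert k) z₀ :=
                    OvoidAux.side_dist hc hg h0 hdvm hdvk hadjm2 rfl hjpos (by omega)
                      (by omega) g hgp hgl hne2
                  exact ih (k + G.dist (w.getVert k) z₀) (by omega) (Sum.inl xv) z₀ hv hz₀S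
                    hduz (by omega) (w.getVert k) (by omega)
                · -- use the `u`-side
                  have hduk : G.dist (Sum.inl xu) (w.getVert (k - 1)) = k - 1 := hgdk1.1
                  have hduz : G.dist (Sum.inl xu) z₀ = k + G.dist (w.getVert k) z₀ :=
                    OvoidAux.side_dist hc hg h0 hdu hduk hadjm1 rfl hjpos (by omega)
                      (by omega) g hgp hgl hside
                  exact ih (k + G.dist (w.getVert k) z₀) (by omega) (Sum.inl xu) z₀ hu hz₀S
                    hduz (by omega) (w.getVert k) (by omega)
              exact ⟨w.getVert k, hmS, by omega, by omega, by omega⟩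
          · -- the minimum distance cannot be `k` : both endpoints would realise it
            have hjeq : G.dist (w.getVert k) z₀ = k := le_antisymm hjk hjge
            have huu : Sum.inl xu = z₀ := huniq (Sum.inl xu) ⟨hu, fun y hy => by
              show G.dist (w.getVert k) (Sum.inl xu) ≤ G.dist (w.getVert k) y
              have h := hz₀min' y hy
              omega⟩
            have hvv : Sum.inl xv = z₀ := huniq (Sum.inl xv) ⟨hv, fun y hy => by
              show G.dist (w.getVert k) (Sum.inl xv) ≤ G.dist (w.getVert k) y
              have h := hz₀min' y hy
              have h2 : G.dist (w.getVert k) (Sum.inl xv) = k := hdv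
              omega⟩
            rw [huu.trans hvv.symm, SimpleGraph.dist_self] at hd
            omega
      · -- `v` is a line : the penultimate element is a point of it
        rcases OvoidAux.adj_cases hadjlast with ⟨p, l, h1, h2, h3⟩ | ⟨p, l, h1, h2, h3⟩
        · have hl : l = lv := (Sum.inr.inj h2).symm
          refine ⟨w.getVert (d - 1), ?_, ?_, ?_, ?_⟩
          · rw [h1]
            exact hS.1.2 lv hv p (by rw [← hl]; exact h3)
          · have ha := hgdl.1
            have hb := hgdl.2.2
            omega
          · have ha := hgdl.1
            omega
          · have ha := hgdl.1
            omega
        · exact absurd h2 (by simp)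
    · -- `u` is a line : the second element is a point of it
      rcases OvoidAux.adj_cases hadj0 with ⟨p, l, h1, h2, h3⟩ | ⟨p, l, h1, h2, h3⟩
      · exact absurd h1 (by simp)
      · have hl : l = lu := (Sum.inr.inj h1).symm
        refine ⟨w.getVert 1, ?_, ?_, ?_, ?_⟩
        · rw [h2]
          exact hS.1.2 lu hu p (by rw [← hl]; exact h3)
        · have ha := hgd1.1
          have hb := hgd1.2.2
          omega
        · have ha := hgd1.1
          omega
        · have ha := hgd1.1
          omega
  obtain ⟨m, hmS, hmsum, hm1, hm2⟩ := hm
  have hza : G.dist u z + G.dist z v = G.dist u v := by rw [hd]; exact hz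
  have hma : G.dist u m + G.dist m v = G.dist u v := by rw [hd]; exact hmsum
  have hglt : 2 * G.dist u v < 2 * (2 * n) := by omega
  -- identify z and m with vertices of the geodesic w
  have hid : ∀ x : P ⊕ L, G.dist u x + G.dist x v = G.dist u v → G.dist u x ≤ d →
      x = w.getVert (G.dist u x) := by
    intro x hx hxd
    have hgd := geodesic_dist hc hwl0 (le_refl (G.dist u x)) (by omega)
    have h1 := hgd.1
    have h2 := hgd.2.2
    refine interval_unique hc hg h0 hglt (G.dist x v) x (w.getVert (G.dist u x)) rfl hx ?_ ?_
    · omega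
    · omega
  have hzid := hid z hza (by omega)
  have hmid := hid m hma (by omega)
  by_cases hcase : G.dist u z ≤ G.dist u m
  · have hgd := geodesic_dist hc hwl0 hcase (by omega)
    have h21 := hgd.2.1
    rw [← hzid, ← hmid] at h21
    exact ih (G.dist u m) hm2 u m hu hmS rfl (by omega) z (by omega)
  · have hgd := geodesic_dist hc hwl0 (le_of_not_ge hcase) (by omega)
    have h21 := hgd.2.1
    rw [← hmid, ← hzid] at h21
    refine ih (d - G.dist u m) (by omega) m v hmS hv (by omega) (by omega) z (by omega)

/-- If `x` and `y` are points of an ovoidal subspace `S` of a generalised `2n`-gon with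
`d(x, y) < 2n`, then every element on the unique geodesic joining `x` and `y` lies in `S`. -/
theorem ovoidal_geodesic_closed {P L : Type*} (n : ℕ) (hn : 1 ≤ n)
    (inc : P → L → Prop) (hpoly : IsGenPolygon (2 * n) inc) (hthick : IsThick inc)
    (S : Set (P ⊕ L)) (hS : IsOvoidal inc n S)
    (x y : P) (hx : Sum.inl x ∈ S) (hy : Sum.inl y ∈ S)
    (hxy : (incGraph inc).dist (Sum.inl x) (Sum.inl y) < 2 * n) :
    ∀ z : P ⊕ L,
      (incGraph inc).dist (Sum.inl x) z + (incGraph inc).dist z (Sum.inl y) =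
        (incGraph inc).dist (Sum.inl x) (Sum.inl y) →
      z ∈ S := by
  intro z hz
  exact OvoidAux.main hn hpoly hS _ (Sum.inl x) (Sum.inl y) hx hy rfl hxy z hz
end
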